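/- Let H be a complex Hilbert space and T : B(H) → B(H) a bounded linear map that maps nonzero projections to nonzero projections and preserves orthogonality of projections (T(p)T(q) = 0 whenever pq = 0), with T(p)* = T(p) for all projections p. Then T(b²) = T(b)² and T(b)* = T(b) for every self-adjoint b ∈ B(H), i.e., T is a Jordan *-homomorphism on self-adjoint elements. -/

import Mathlib

open Filter Topology ContinuousLinearMap

namespace JordanAux

variable {H : Type*} [NormedAddCommGroup H] [InnerProductSpace ℂ H] [CompleteSpace H]

local notation "⟪" x ", " y "⟫" => @inner ℂ _ _ x y

/-- strong (pointwise) limit of a sequence of operators -/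
def SLim (u : ℕ → (H →L[ℂ] H)) (v : H →L[ℂ] H) : Prop :=
  ∀ x, Tendsto (fun n => u n x) atTop (𝓝 (v x))

lemma SLim.selfAdjoint {u : ℕ → (H →L[ℂ] H)} {v : H →L[ℂ] H}
    (hu : SLim u v) (h : ∀ n, IsSelfAdjoint (u n)) : IsSelfAdjoint v := by
  rw [ContinuousLinearMap.isSelfAdjoint_iff_isSymmetric]
  intro x y
  have h1 : Tendsto (fun n => ⟪u n x, y⟫) atTop (𝓝 ⟪v x, y⟫) :=
    (hu x).inner tendsto_const_nhds
  have h2 : Tendsto (fun n => ⟪x, u n y⟫) atTop (𝓝 ⟪x, v y⟫) :=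
    tendsto_const_nhds.inner (hu y)
  have h3 : ∀ n, ⟪u n x, y⟫ = ⟪x, u n y⟫ := fun n =>
    (ContinuousLinearMap.isSelfAdjoint_iff_isSymmetric.mp (h n)) x y
  exact tendsto_nhds_unique (h1.congr h3) h2

lemma SLim.nonneg {u : ℕ → (H →L[ℂ] H)} {v : H →L[ℂ] H}
    (hu : SLim u v) (h : ∀ n, 0 ≤ u n) : 0 ≤ v := by
  rw [ContinuousLinearMap.nonneg_iff_isPositive]
  refine isPositive_def'.mpr ⟨hu.selfAdjoint fun n => ((ContinuousLinearMap.nonneg_iff_isPositive _).mp (h n)).isSelfAdjoint, ?_⟩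
  intro x
  have h1 : Tendsto (fun n => (u n).reApplyInnerSelf x) atTop (𝓝 (v.reApplyInnerSelf x)) := by
    simp only [ContinuousLinearMap.reApplyInnerSelf]
    exact (Complex.continuous_re.tendsto _).comp ((hu x).inner tendsto_const_nhds)
  exact le_of_tendsto_of_tendsto' tendsto_const_nhds h1 fun n =>
    ((ContinuousLinearMap.nonneg_iff_isPositive _).mp (h n)).2 x

/-- key inequality: if `0 ≤ c` and `c * c ≤ c` then `‖c x‖ ^ 2 ≤ re ⟪c x, x⟫`. -/
lemma norm_sq_le {c : H →L[ℂ] H} (h0 : 0 ≤ c) (h1 : c * c ≤ c) (x : H) :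
    ‖c x‖ ^ 2 ≤ RCLike.re ⟪c x, x⟫ := by
  have hsa : IsSelfAdjoint c := ((ContinuousLinearMap.nonneg_iff_isPositive _).mp h0).isSelfAdjoint
  have hadj : ⟪c x, c x⟫ = ⟪x, c (c x)⟫ := by
    have := ContinuousLinearMap.adjoint_inner_left c (c x) x
    rwa [hsa.adjoint_eq] at this
  have key : RCLike.re ⟪(c * c) x, x⟫ = ‖c x‖ ^ 2 := by
    calc RCLike.re ⟪(c * c) x, x⟫ = RCLike.re ⟪c (c x), x⟫ := rfl
      _ = RCLike.re ⟪x, c (c x)⟫ := inner_re_symm _ _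
      _ = RCLike.re ⟪c x, c x⟫ := by rw [← hadj]
      _ = ‖c x‖ ^ 2 := by rw [inner_self_eq_norm_sq]
  have hpos : (0:H →L[ℂ] H) ≤ c - c * c := by simpa using sub_nonneg.mpr h1
  have hre := ((ContinuousLinearMap.nonneg_iff_isPositive _).mp hpos).2 x
  simp only [ContinuousLinearMap.reApplyInnerSelf, ContinuousLinearMap.sub_apply,
    inner_sub_left, map_sub] at hre
  linarith

/-- existence of strong limits of suitable decreasing sequences of positive contractions -/
lemma slim_exists (c : ℕ → (H →L[ℂ] H)) (h0 : ∀ n, 0 ≤ c n)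
    (hmono : ∀ n m, n ≤ m → c m ≤ c n)
    (hsq : ∀ n m, n ≤ m → (c n - c m) * (c n - c m) ≤ c n - c m)
    (hbdd : ∀ n, ‖c n‖ ≤ 1) :
    ∃ e : H →L[ℂ] H, SLim c e := by
  have hcauchy : ∀ x : H, CauchySeq (fun n => c n x) := by
    intro x
    set t : ℕ → ℝ := fun n => RCLike.re ⟪c n x, x⟫ with ht
    have hanti : Antitone t := by
      intro n m hnm
      have hpos : (0:H →L[ℂ] H) ≤ c n - c m := sub_nonneg.mpr (hmono n m hnm)
      have := ((ContinuousLinearMap.nonneg_iff_isPositive _).mp hpos).2 x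
      simp only [ContinuousLinearMap.reApplyInnerSelf, ContinuousLinearMap.sub_apply,
        inner_sub_left, map_sub] at this
      simp only [ht]
      linarith
    have hb0 : BddBelow (Set.range t) := by
      refine ⟨0, fun y hy => ?_⟩
      obtain ⟨n, rfl⟩ := hy
      exact ((ContinuousLinearMap.nonneg_iff_isPositive _).mp (h0 n)).2 x
    have htconv : CauchySeq t :=
      (tendsto_atTop_ciInf hanti hb0).cauchySeq
    rw [Metric.cauchySeq_iff']
    intro ε hε
    obtain ⟨N, hN⟩ := Metric.cauchySeq_iff'.mp htconv (ε ^ 2) (by positivity)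
    refine ⟨N, fun n hn => ?_⟩
    have hdiff := norm_sq_le (sub_nonneg.mpr (hmono N n hn)) (hsq N n hn) x
    have heq : dist (c n x) (c N x) ^ 2 = ‖(c N - c n) x‖ ^ 2 := by
      rw [dist_eq_norm, ← norm_neg]
      congr 1
      simp [ContinuousLinearMap.sub_apply]
    have hle : RCLike.re ⟪(c N - c n) x, x⟫ ≤ dist (t n) (t N) := by
      simp only [ContinuousLinearMap.sub_apply, inner_sub_left, map_sub]
      rw [Real.dist_eq, abs_sub_comm]
      exact le_abs_self _
    have h2 := hN n hn
    nlinarith [dist_nonneg (x := c n x) (y := c N x), sq_abs (dist (t n) (t N))]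
  choose l hl using fun x => cauchySeq_tendsto_of_complete (hcauchy x)
  have hadd : ∀ x y, l (x + y) = l x + l y := by
    intro x y
    refine tendsto_nhds_unique (hl (x + y)) ?_
    have := (hl x).add (hl y)
    simpa using this
  have hsmul : ∀ (a : ℂ) (x : H), l (a • x) = a • l x := by
    intro a x
    refine tendsto_nhds_unique (hl (a • x)) ?_
    have := (hl x).const_smul a
    simpa using this
  have hnorm : ∀ x, ‖l x‖ ≤ 1 * ‖x‖ := by
    intro x
    refine le_of_tendsto' (hl x).norm fun n => ?_
    calc ‖c n x‖ ≤ ‖c n‖ * ‖x‖ := (c n).le_opNorm x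
      _ ≤ 1 * ‖x‖ := by have := hbdd n; have := norm_nonneg x; nlinarith
  refine ⟨LinearMap.mkContinuous ⟨⟨l, hadd⟩, hsmul⟩ 1 hnorm, ?_⟩
  intro x
  exact hl x



/-- continuous ramp: `0` below `τ - ε`, `1` above `τ`. -/
noncomputable def ramp (τ ε : ℝ) : ℝ → ℝ := fun s => min 1 (max 0 ((s - (τ - ε)) / ε))

variable {τ τ' ε s : ℝ}

@[fun_prop]
lemma ramp_continuous : Continuous (ramp τ ε) := by
  unfold ramp; fun_prop

lemma ramp_nonneg : 0 ≤ ramp τ ε s := le_min zero_le_one (le_max_left _ _)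

lemma ramp_le_one : ramp τ ε s ≤ 1 := min_le_left _ _

lemma ramp_eq_one (hε : 0 < ε) (h : τ ≤ s) : ramp τ ε s = 1 := by
  have h1 : (1:ℝ) ≤ (s - (τ - ε)) / ε := by
    rw [le_div_iff₀ hε]; linarith
  simp only [ramp]
  rw [max_eq_right (by linarith), min_eq_left h1]

lemma ramp_eq_zero (hε : 0 < ε) (h : s ≤ τ - ε) : ramp τ ε s = 0 := by
  have h1 : (s - (τ - ε)) / ε ≤ 0 := div_nonpos_of_nonpos_of_nonneg (by linarith) hε.le
  simp only [ramp]
  rw [max_eq_left h1, min_eq_right zero_le_one]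

lemma lt_of_ramp_pos (hε : 0 < ε) (h : 0 < ramp τ ε s) : τ - ε < s := by
  by_contra hc
  rw [ramp_eq_zero hε (by linarith)] at h
  exact lt_irrefl _ h

lemma lt_of_ramp_lt_one (hε : 0 < ε) (h : ramp τ ε s < 1) : s < τ := by
  by_contra hc
  rw [ramp_eq_one hε (by linarith)] at h
  exact lt_irrefl _ h

lemma ramp_anti (hε : 0 < ε) (hτ : τ ≤ τ') : ramp τ' ε s ≤ ramp τ ε s := by
  unfold ramp
  gcongr (min 1 (max 0 (?_ / ε))) <;> linarith



section Approx

variable {H : Type*} [NormedAddCommGroup H] [InnerProductSpace ℂ H] [CompleteSpace H]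
  [Nontrivial H]

local notation "⟪" x ", " y "⟫" => @inner ℂ _ _ x y

set_option maxHeartbeats 2000000 in
set_option synthInstance.maxHeartbeats 400000 in
lemma approx (b : H →L[ℂ] H) (hb : IsSelfAdjoint b) {ε : ℝ} (hε : 0 < ε) :
    ∃ (N : ℕ) (p : ℕ → (H →L[ℂ] H)) (lam : ℕ → ℝ),
      (∀ i, IsIdempotentElem (p i)) ∧ (∀ i, IsSelfAdjoint (p i)) ∧
      (∀ i j, i ≠ j → p i * p j = 0) ∧
      ‖b - ∑ i ∈ Finset.range N, (lam i) • p i‖ ≤ 3 * ε := by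
  set M := ‖b‖ with hM
  set t : ℕ → ℝ := fun i => -M - ε + i * ε with htdef
  have htmono : ∀ i j : ℕ, i ≤ j → t i ≤ t j := by
    intro i j hij
    simp only [htdef]
    have : (i:ℝ) ≤ j := by exact_mod_cast hij
    nlinarith
  have htsucc : ∀ i : ℕ, t (i + 1) = t i + ε := by
    intro i; simp only [htdef]; push_cast; ring
  set h : ℕ → ℝ → ℝ := fun i => ramp (t i) ε with hhdef
  have hcont : ∀ (i n : ℕ), Continuous (fun s => h i s ^ (n+1)) := by
    intro i n; simp only [hhdef]; fun_prop
  have h0le : ∀ i s, 0 ≤ h i s := fun i s => ramp_nonneg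
  have hle1 : ∀ i s, h i s ≤ 1 := fun i s => ramp_le_one
  have horder : ∀ (i j : ℕ), i ≤ j → ∀ s, h j s ≤ h i s := fun i j hij s =>
    ramp_anti hε (htmono i j hij)
  set c : ℕ → ℕ → (H →L[ℂ] H) := fun i n => cfc (fun s => h i s ^ (n+1)) b with hcdef
  -- basic positivity / order facts
  have hc0 : ∀ i n, 0 ≤ c i n := by
    intro i n
    exact cfc_nonneg (fun s _ => pow_nonneg (h0le i s) _)
  have hcmono : ∀ i n m, n ≤ m → c i m ≤ c i n := by
    intro i n m hnm
    exact cfc_mono (fun s _ => pow_le_pow_of_le_one (h0le i s) (hle1 i s) (by omega))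
  have hcsub : ∀ i n m, c i n - c i m = cfc (fun s => h i s ^ (n+1) - h i s ^ (m+1)) b := by
    intro i n m
    rw [cfc_sub (fun s => h i s ^ (n+1)) (fun s => h i s ^ (m+1)) b
      ((hcont i n).continuousOn) ((hcont i m).continuousOn)]
  have hcsq : ∀ i n m, n ≤ m → (c i n - c i m) * (c i n - c i m) ≤ c i n - c i m := by
    intro i n m hnm
    rw [hcsub i n m, ← cfc_mul (fun s => h i s ^ (n+1) - h i s ^ (m+1))
      (fun s => h i s ^ (n+1) - h i s ^ (m+1)) b (((hcont i n).sub (hcont i m)).continuousOn)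
      (((hcont i n).sub (hcont i m)).continuousOn)]
    refine cfc_mono (fun s _ => ?_)
    have h1 : 0 ≤ h i s ^ (n+1) - h i s ^ (m+1) :=
      sub_nonneg.mpr (pow_le_pow_of_le_one (h0le i s) (hle1 i s) (by omega))
    have h2 : h i s ^ (n+1) - h i s ^ (m+1) ≤ 1 := by
      have := pow_le_one₀ (h0le i s) (hle1 i s) (n := n+1)
      have := pow_nonneg (h0le i s) (m+1)
      linarith
    nlinarith
  have hcle1 : ∀ i n, c i n ≤ 1 := by
    intro i n
    calc c i n ≤ cfc (fun _ : ℝ => (1:ℝ)) b :=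
          cfc_mono (fun s _ => pow_le_one₀ (h0le i s) (hle1 i s))
      _ = 1 := cfc_one ℝ b
  have hcnorm : ∀ i n, ‖c i n‖ ≤ 1 := fun i n =>
    (CStarAlgebra.norm_le_one_iff_of_nonneg _ (hc0 i n)).mpr (hcle1 i n)
  -- strong limits
  have hex : ∀ i : ℕ, ∃ e : H →L[ℂ] H, SLim (c i) e := fun i =>
    slim_exists (c i) (hc0 i) (hcmono i) (fun n m hnm => hcsq i n m hnm) (hcnorm i)
  choose e he using hex
  -- multiplication identities at the cfc level
  have hcc : ∀ i n m, c i n * c i m = c i (n + m + 1) := by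
    intro i n m
    rw [hcdef]
    rw [← cfc_mul _ _ b ((hcont i n).continuousOn) ((hcont i m).continuousOn)]
    refine cfc_congr (fun s _ => ?_)
    simp only [← pow_add]
    ring_nf
  have hij_mul : ∀ i j, i < j → ∀ n m, c i n * c j m = c j m := by
    intro i j hij n m
    rw [hcdef, ← cfc_mul _ _ b ((hcont i n).continuousOn) ((hcont j m).continuousOn)]
    refine cfc_congr (fun s _ => ?_)
    rcases eq_or_lt_of_le (h0le j s) with hz | hpos
    · simp only [← hz]
      simp [zero_pow]
    · have h1 : h i s = 1 := by
        refine ramp_eq_one hε ?_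
        have := lt_of_ramp_pos hε hpos
        have := htmono (i+1) j (by omega)
        have := htsucc i
        simp only [hhdef] at *
        linarith
      simp only [hhdef] at h1 ⊢
      rw [h1, one_pow, one_mul]
  have hji_mul : ∀ i j, i < j → ∀ n m, c j n * c i m = c j n := by
    intro i j hij n m
    rw [hcdef, ← cfc_mul _ _ b ((hcont j n).continuousOn) ((hcont i m).continuousOn)]
    refine cfc_congr (fun s _ => ?_)
    rcases eq_or_lt_of_le (h0le j s) with hz | hpos
    · simp only [← hz]
      simp [zero_pow]
    · have h1 : h i s = 1 := by
        refine ramp_eq_one hε ?_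
        have := lt_of_ramp_pos hε hpos
        have := htmono (i+1) j (by omega)
        have := htsucc i
        simp only [hhdef] at *
        linarith
      simp only [hhdef] at h1 ⊢
      rw [h1, one_pow, mul_one]
  -- absorption at the strong-limit level
  have habs : ∀ i m x, e i ((c i m) x) = e i x := by
    intro i m x
    refine tendsto_nhds_unique (he i (c i m x)) ?_
    have h2 := (he i x).comp (tendsto_add_atTop_nat (m+1))
    refine h2.congr fun n => ?_
    calc c i (n + (m+1)) x = c i (n + m + 1) x := by ring_nf
      _ = (c i n * c i m) x := by rw [hcc]
      _ = c i n (c i m x) := rfl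
  have heid : ∀ i, IsIdempotentElem (e i) := by
    intro i
    rw [IsIdempotentElem]
    ext x
    have h1 : Filter.Tendsto (fun m => e i (c i m x)) Filter.atTop (𝓝 (e i (e i x))) :=
      ((e i).continuous.tendsto _).comp (he i x)
    have h2 := (h1.congr (fun m => habs i m x)) -- tends to e i (e i x) but is constant e i x
    have h3 := tendsto_nhds_unique h2 tendsto_const_nhds
    simpa [ContinuousLinearMap.mul_apply] using h3
  have hEij : ∀ i j, i ≤ j → e i * e j = e j := by
    intro i j hij
    rcases eq_or_lt_of_le hij with rfl | hlt
    · exact heid i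
    ext x
    have h1 : ∀ m, e i (c j m x) = c j m x := by
      intro m
      refine tendsto_nhds_unique (he i (c j m x)) ?_
      have : ∀ n, c i n (c j m x) = c j m x := by
        intro n
        calc c i n (c j m x) = (c i n * c j m) x := rfl
          _ = c j m x := by rw [hij_mul i j hlt]
      simpa [this] using (tendsto_const_nhds : Filter.Tendsto (fun _ : ℕ => c j m x) _ _)
    have h2 : Filter.Tendsto (fun m => e i (c j m x)) Filter.atTop (𝓝 (e i (e j x))) :=
      ((e i).continuous.tendsto _).comp (he j x)
    have h3 := tendsto_nhds_unique (h2.congr h1) (he j x)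
    simpa [ContinuousLinearMap.mul_apply] using h3
  have hEji : ∀ i j, i ≤ j → e j * e i = e j := by
    intro i j hij
    rcases eq_or_lt_of_le hij with rfl | hlt
    · exact heid i
    ext x
    have h1 : ∀ m, e j (c i m x) = e j x := by
      intro m
      have ha : Filter.Tendsto (fun n => c j n (c i m x)) Filter.atTop (𝓝 (e j (c i m x))) :=
        he j (c i m x)
      have hb2 : ∀ n, c j n (c i m x) = c j n x := by
        intro n
        calc c j n (c i m x) = (c j n * c i m) x := rfl
          _ = c j n x := by rw [hji_mul i j hlt]
      exact tendsto_nhds_unique (ha.congr hb2) (he j x)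
    have h2 : Filter.Tendsto (fun m => e j (c i m x)) Filter.atTop (𝓝 (e j (e i x))) :=
      ((e j).continuous.tendsto _).comp (he i x)
    have h3 := tendsto_nhds_unique (h2.congr h1) tendsto_const_nhds
    simpa [ContinuousLinearMap.mul_apply] using h3
  -- spectrum bounds
  have hspec : ∀ s ∈ spectrum ℝ b, -M ≤ s ∧ s ≤ M := by
    intro s hs
    have hn := spectrum.norm_le_norm_of_mem hs
    rw [Real.norm_eq_abs] at hn
    have := abs_le.mp hn
    exact ⟨this.1, this.2⟩
  -- e 0 = 1
  have hc0n : ∀ n, c 0 n = (1 : H →L[ℂ] H) := by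
    intro n
    have hcong : ∀ s ∈ spectrum ℝ b, h 0 s ^ (n+1) = (fun _ : ℝ => (1:ℝ)) s := by
      intro s hs
      have h1 : h 0 s = 1 := by
        refine ramp_eq_one hε ?_
        have := (hspec s hs).1
        simp only [htdef]
        push_cast
        linarith
      simp [h1]
    calc c 0 n = cfc (fun _ : ℝ => (1:ℝ)) b := cfc_congr hcong
      _ = 1 := cfc_one ℝ b
  have hE0 : e 0 = 1 := by
    ext x
    have h2 : ∀ n : ℕ, c 0 n x = x := fun n => by rw [hc0n n]; rfl
    have h3 := tendsto_nhds_unique ((he 0 x).congr h2) tendsto_const_nhds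
    simpa using h3
  -- choice of N
  set N : ℕ := ⌈(2*M)/ε⌉₊ + 2 with hNdef
  have hNlarge : M ≤ t N - ε := by
    have h1 : (2*M)/ε ≤ (⌈(2*M)/ε⌉₊ : ℝ) := Nat.le_ceil _
    have h2 : (2*M)/ε * ε = 2*M := div_mul_cancel₀ _ (ne_of_gt hε)
    have h3 : ((N:ℕ):ℝ) = (⌈(2*M)/ε⌉₊ : ℝ) + 2 := by simp [hNdef]
    simp only [htdef]
    rw [h3]
    nlinarith
  have hcNn : ∀ n, c N n = 0 := by
    intro n
    have hcong : ∀ s ∈ spectrum ℝ b, h N s ^ (n+1) = (fun _ : ℝ => (0:ℝ)) s := by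
      intro s hs
      have h1 : h N s = 0 := by
        refine ramp_eq_zero hε ?_
        have := (hspec s hs).2
        linarith
      simp [h1]
    calc c N n = cfc (fun _ : ℝ => (0:ℝ)) b := cfc_congr hcong
      _ = 0 := by
          have := cfc_zero (R := ℝ) (a := b) (A := H →L[ℂ] H)
          simpa using this
  have hEN : e N = 0 := by
    ext x
    have h2 : ∀ n : ℕ, c N n x = 0 := fun n => by rw [hcNn n]; rfl
    have h3 := tendsto_nhds_unique ((he N x).congr h2) tendsto_const_nhds
    simpa using h3
  -- the projections
  set p : ℕ → (H →L[ℂ] H) := fun i => e i - e (i+1) with hpdef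
  have hEnn : ∀ i, 0 ≤ e i := fun i => SLim.nonneg (he i) (hc0 i)
  have hEsa : ∀ i, IsSelfAdjoint (e i) := fun i => .of_nonneg (hEnn i)
  have hpid : ∀ i, IsIdempotentElem (p i) := by
    intro i
    rw [IsIdempotentElem]
    simp only [hpdef]
    rw [sub_mul, mul_sub, mul_sub, (heid i), (heid (i+1)),
      hEij i (i+1) (by omega), hEji i (i+1) (by omega)]
    abel
  have hpsa : ∀ i, IsSelfAdjoint (p i) := fun i => (hEsa i).sub (hEsa (i+1))
  have hporth : ∀ i j, i ≠ j → p i * p j = 0 := by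
    have key : ∀ i j, i < j → p i * p j = 0 ∧ p j * p i = 0 := by
      intro i j hij
      constructor
      · simp only [hpdef]
        rw [sub_mul, mul_sub, mul_sub,
          hEij i j (by omega), hEij i (j+1) (by omega),
          hEij (i+1) j (by omega), hEij (i+1) (j+1) (by omega)]
        abel
      · simp only [hpdef]
        rw [sub_mul, mul_sub, mul_sub,
          hEji i j (by omega), hEji (i+1) j (by omega),
          hEji i (j+1) (by omega), hEji (i+1) (j+1) (by omega)]
        abel
    intro i j hij
    rcases lt_or_gt_of_ne hij with hlt | hgt
    · exact (key i j hlt).1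
    · exact (key j i hgt).2
  -- localized positivity
  have hdiffcont : ∀ i n, Continuous (fun s => h i s ^ (n+1) - h (i+1) s ^ (n+1)) :=
    fun i n => (hcont i n).sub (hcont (i+1) n)
  have hdiff_nonneg : ∀ i n s, 0 ≤ h i s ^ (n+1) - h (i+1) s ^ (n+1) := fun i n s =>
    sub_nonneg.mpr (pow_le_pow_left₀ (h0le (i+1) s) (horder i (i+1) (by omega) s) _)
  have hplim : ∀ i x, Filter.Tendsto (fun n => (c i n - c (i+1) n) x)
      Filter.atTop (𝓝 (p i x)) := by
    intro i x
    simp only [ContinuousLinearMap.sub_apply, hpdef]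
    exact (he i x).sub (he (i+1) x)
  have hsl : ∀ (i : ℕ) (d : H →L[ℂ] H),
      SLim (fun n => d * (c i n - c (i+1) n)) (d * p i) := by
    intro i d x
    exact ((d.continuous.tendsto _).comp (hplim i x)).congr (fun n => rfl)
  have hcfc_diff : ∀ i n, cfc (fun s => h i s ^ (n+1) - h (i+1) s ^ (n+1)) b
      = c i n - c (i+1) n := by
    intro i n
    rw [cfc_sub _ _ b ((hcont i n).continuousOn) ((hcont (i+1) n).continuousOn)]
  have hlow : ∀ i, (0:H →L[ℂ] H) ≤ (b - (t i - ε) • 1) * p i := by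
    intro i
    have hfun : ∀ n, (0:H →L[ℂ] H) ≤
        cfc (fun s => (s - (t i - ε)) * (h i s ^ (n+1) - h (i+1) s ^ (n+1))) b := by
      intro n
      refine cfc_nonneg fun s _ => ?_
      rcases eq_or_lt_of_le (hdiff_nonneg i n s) with hz | hpos
      · rw [← hz, mul_zero]
      · have h1 : 0 < h i s := by
          rcases eq_or_lt_of_le (h0le i s) with hz2 | h2
          · exfalso
            have h3 := horder i (i+1) (by omega) s
            have h4 : h (i+1) s = 0 := le_antisymm (by rw [← hz2] at h3; exact h3) (h0le (i+1) s)
            rw [← hz2, h4] at hpos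
            simp [zero_pow] at hpos
          · exact h2
        have h2 := lt_of_ramp_pos hε h1
        have h3 : (0:ℝ) < s - (t i - ε) := by
          linarith
        exact le_of_lt (mul_pos h3 hpos)
    have hop : ∀ n, cfc (fun s => (s - (t i - ε)) * (h i s ^ (n+1) - h (i+1) s ^ (n+1))) b
        = (b - (t i - ε) • 1) * (c i n - c (i+1) n) := by
      intro n
      rw [cfc_mul _ _ b (by fun_prop) ((hdiffcont i n).continuousOn)]
      congr 1
      · rw [cfc_sub (fun s : ℝ => s) (fun _ => t i - ε) b (by fun_prop) (by fun_prop),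
          cfc_id' ℝ b, cfc_const _ b, Algebra.algebraMap_eq_smul_one]
      · exact hcfc_diff i n
    exact SLim.nonneg (hsl i _) (fun n => (hop n) ▸ hfun n)
  have hhigh : ∀ i, (0:H →L[ℂ] H) ≤ ((t (i+1)) • 1 - b) * p i := by
    intro i
    have hfun : ∀ n, (0:H →L[ℂ] H) ≤
        cfc (fun s => (t (i+1) - s) * (h i s ^ (n+1) - h (i+1) s ^ (n+1))) b := by
      intro n
      refine cfc_nonneg fun s _ => ?_
      rcases eq_or_lt_of_le (hdiff_nonneg i n s) with hz | hpos
      · rw [← hz, mul_zero]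
      · have h1 : h (i+1) s < 1 := by
          rcases lt_or_ge (h (i+1) s) 1 with h2 | h2
          · exact h2
          · exfalso
            have h3 : h (i+1) s = 1 := le_antisymm (hle1 (i+1) s) h2
            have h4 : h i s = 1 := le_antisymm (hle1 i s)
              (by rw [← h3]; exact horder i (i+1) (by omega) s)
            rw [h3, h4] at hpos
            simp at hpos
        have h2 := lt_of_ramp_lt_one hε h1
        have h3 : (0:ℝ) < t (i+1) - s := by
          linarith
        exact le_of_lt (mul_pos h3 hpos)
    have hop : ∀ n, cfc (fun s => (t (i+1) - s) * (h i s ^ (n+1) - h (i+1) s ^ (n+1))) b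
        = ((t (i+1)) • 1 - b) * (c i n - c (i+1) n) := by
      intro n
      rw [cfc_mul _ _ b (by fun_prop) ((hdiffcont i n).continuousOn)]
      congr 1
      · rw [cfc_sub (fun _ => t (i+1)) (fun s : ℝ => s) b (by fun_prop) (by fun_prop),
          cfc_id' ℝ b, cfc_const _ b, Algebra.algebraMap_eq_smul_one]
      · exact hcfc_diff i n
    exact SLim.nonneg (hsl i _) (fun n => (hop n) ▸ hfun n)
  -- assembly
  set s0 : H →L[ℂ] H := ∑ i ∈ Finset.range N, t i • p i with hs0def
  have hsum1 : ∑ i ∈ Finset.range N, p i = 1 := by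
    simp only [hpdef]
    rw [Finset.sum_range_sub' e N, hE0, hEN, sub_zero]
  have hexpand_low : b - s0 + ε • 1 = ∑ i ∈ Finset.range N, (b - (t i - ε) • 1) * p i := by
    have h1 : ∀ i ∈ Finset.range N, (b - (t i - ε) • (1:H →L[ℂ] H)) * p i
        = b * p i - t i • p i + ε • p i := by
      intro i _
      rw [sub_mul, smul_mul_assoc, one_mul, sub_smul]
      abel
    rw [Finset.sum_congr rfl h1]
    rw [Finset.sum_add_distrib, Finset.sum_sub_distrib, ← Finset.mul_sum, ← Finset.smul_sum,
      hsum1, mul_one]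
    try abel
  have hlowS : (0:H →L[ℂ] H) ≤ b - s0 + ε • 1 := by
    rw [hexpand_low]
    exact Finset.sum_nonneg (fun i _ => hlow i)
  have hexpand_high : ε • 1 - (b - s0) = ∑ i ∈ Finset.range N, ((t (i+1)) • 1 - b) * p i := by
    have h1 : ∀ i ∈ Finset.range N, ((t (i+1)) • (1:H →L[ℂ] H) - b) * p i
        = t i • p i + ε • p i - b * p i := by
      intro i _
      rw [sub_mul, smul_mul_assoc, one_mul, htsucc i, add_smul]
    rw [Finset.sum_congr rfl h1]
    rw [Finset.sum_sub_distrib, Finset.sum_add_distrib, ← Finset.mul_sum, ← Finset.smul_sum,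
      hsum1, mul_one]
    try abel
  have hhighS : (0:H →L[ℂ] H) ≤ ε • 1 - (b - s0) := by
    rw [hexpand_high]
    exact Finset.sum_nonneg (fun i _ => hhigh i)
  have hupper : b - s0 + ε • 1 ≤ algebraMap ℝ (H →L[ℂ] H) (2*ε) := by
    have h1 : algebraMap ℝ (H →L[ℂ] H) (2*ε) = ε • 1 + ε • 1 := by
      rw [Algebra.algebraMap_eq_smul_one, two_mul, add_smul]
    rw [h1]
    have h2 : b - s0 ≤ ε • (1:H →L[ℂ] H) := sub_nonneg.mp hhighS
    exact add_le_add_left h2 _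
  have hn2 : ‖b - s0 + ε • (1:H →L[ℂ] H)‖ ≤ 2*ε :=
    (CStarAlgebra.norm_le_iff_le_algebraMap _ (by positivity) hlowS).mpr hupper
  have hn3 : ‖b - s0‖ ≤ 3 * ε := by
    have h4 : b - s0 = (b - s0 + ε • 1) - ε • 1 := by abel
    rw [h4]
    refine (norm_sub_le _ _).trans ?_
    have h5 : ‖(ε • (1:H →L[ℂ] H))‖ ≤ ε := by
      rw [norm_smul, Real.norm_eq_abs, abs_of_pos hε, norm_one, mul_one]
    linarith
  exact ⟨N, p, t, hpid, hpsa, hporth, hn3⟩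



end Approx

section Combo

variable {H : Type*} [NormedAddCommGroup H] [InnerProductSpace ℂ H] [CompleteSpace H]

lemma combo (T : (H →L[ℂ] H) →L[ℂ] (H →L[ℂ] H))
    (hproj : ∀ p : H →L[ℂ] H, IsIdempotentElem p → IsSelfAdjoint p → p ≠ 0 →
      IsIdempotentElem (T p) ∧ IsSelfAdjoint (T p) ∧ T p ≠ 0)
    (hstar : ∀ p : H →L[ℂ] H, IsIdempotentElem p → IsSelfAdjoint p → star (T p) = T p)
    (horth : ∀ p q : H →L[ℂ] H, IsIdempotentElem p → IsSelfAdjoint p →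
      IsIdempotentElem q → IsSelfAdjoint q → p * q = 0 → T p * T q = 0)
    (N : ℕ) (p : ℕ → H →L[ℂ] H) (lam : ℕ → ℝ)
    (hpid : ∀ i, IsIdempotentElem (p i)) (hpsa : ∀ i, IsSelfAdjoint (p i))
    (hporth : ∀ i j, i ≠ j → p i * p j = 0) :
    T ((∑ i ∈ Finset.range N, lam i • p i) * (∑ i ∈ Finset.range N, lam i • p i))
      = T (∑ i ∈ Finset.range N, lam i • p i) * T (∑ i ∈ Finset.range N, lam i • p i)
    ∧ star (T (∑ i ∈ Finset.range N, lam i • p i)) = T (∑ i ∈ Finset.range N, lam i • p i) := by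
  set s := ∑ i ∈ Finset.range N, lam i • p i with hsdef
  have hTsmul : ∀ (r : ℝ) (x : H →L[ℂ] H), T (r • x) = r • T x := fun r x =>
    T.map_smul_of_tower r x
  have hTs : T s = ∑ i ∈ Finset.range N, lam i • T (p i) := by
    rw [hsdef, map_sum]
    exact Finset.sum_congr rfl fun i _ => hTsmul _ _
  have hTdiag : ∀ i, T (p i) * T (p i) = T (p i) := by
    intro i
    rcases eq_or_ne (p i) 0 with hz | hnz
    · rw [hz]
      simp
    · exact (hproj (p i) (hpid i) (hpsa i) hnz).1
  have hss : s * s = ∑ i ∈ Finset.range N, (lam i * lam i) • p i := by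
    rw [hsdef, Finset.sum_mul_sum]
    refine Finset.sum_congr rfl fun i hi => ?_
    rw [Finset.sum_eq_single i]
    · rw [smul_mul_smul_comm, (hpid i)]
    · intro j _ hji
      rw [smul_mul_smul_comm, hporth i j (Ne.symm hji), smul_zero]
    · intro hni
      exact absurd hi hni
  have h2 : T (s * s) = ∑ i ∈ Finset.range N, (lam i * lam i) • T (p i) := by
    rw [hss, map_sum]
    exact Finset.sum_congr rfl fun i _ => hTsmul _ _
  have h3 : T s * T s = ∑ i ∈ Finset.range N, (lam i * lam i) • T (p i) := by
    rw [hTs, Finset.sum_mul_sum]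
    refine Finset.sum_congr rfl fun i hi => ?_
    rw [Finset.sum_eq_single i]
    · rw [smul_mul_smul_comm, hTdiag i]
    · intro j _ hji
      rw [smul_mul_smul_comm,
        horth (p i) (p j) (hpid i) (hpsa i) (hpid j) (hpsa j) (hporth i j (Ne.symm hji)),
        smul_zero]
    · intro hni
      exact absurd hi hni
  refine ⟨h2.trans h3.symm, ?_⟩
  rw [hTs, star_sum]
  refine Finset.sum_congr rfl fun i _ => ?_
  rw [star_smul, star_trivial, hstar (p i) (hpid i) (hpsa i)]

end Combo

end JordanAux


open Filter Topology in
/-- A bounded linear map on `B(H)` mapping nonzero projections to nonzero projections,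
preserving orthogonality of projections and adjoints of projections, is a Jordan
*-homomorphism on self-adjoint elements: `T(b²) = T(b)²` and `T(b)* = T(b)`. -/
theorem jordan_on_selfadjoint {H : Type*} [NormedAddCommGroup H] [InnerProductSpace ℂ H]
    [CompleteSpace H] (T : (H →L[ℂ] H) →L[ℂ] (H →L[ℂ] H))
    (hproj : ∀ p : H →L[ℂ] H, IsIdempotentElem p → IsSelfAdjoint p → p ≠ 0 →
      IsIdempotentElem (T p) ∧ IsSelfAdjoint (T p) ∧ T p ≠ 0)
    (hstar : ∀ p : H →L[ℂ] H, IsIdempotentElem p → IsSelfAdjoint p → star (T p) = T p)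
    (horth : ∀ p q : H →L[ℂ] H, IsIdempotentElem p → IsSelfAdjoint p →
      IsIdempotentElem q → IsSelfAdjoint q → p * q = 0 → T p * T q = 0) :
    ∀ b : H →L[ℂ] H, IsSelfAdjoint b → T (b * b) = T b * T b ∧ IsSelfAdjoint (T b) := by
  intro b hbsa
  rcases subsingleton_or_nontrivial H with hsub | hnt
  · have : Subsingleton (H →L[ℂ] H) := ⟨fun f g => by ext x; exact Subsingleton.elim _ _⟩
    exact ⟨Subsingleton.elim _ _, Subsingleton.elim _ _⟩
  · have key : ∀ n : ℕ, ∃ s : H →L[ℂ] H, ‖b - s‖ ≤ 3 * (1/(n+1)) ∧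
        T (s * s) = T s * T s ∧ star (T s) = T s := by
      intro n
      obtain ⟨N, p, lam, hpid, hpsa, hporth, hnorm⟩ :=
        JordanAux.approx b hbsa (ε := 1/((n:ℝ)+1)) (by positivity)
      obtain ⟨hmul, hst⟩ := JordanAux.combo T hproj hstar horth N p lam hpid hpsa hporth
      exact ⟨∑ i ∈ Finset.range N, lam i • p i, hnorm, hmul, hst⟩
    choose s hs hmul hstar2 using key
    have hslim : Tendsto s atTop (𝓝 b) := by
      have h0 : Tendsto (fun n : ℕ => 3 * (1/((n:ℝ)+1))) atTop (𝓝 0) := by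
        have := tendsto_one_div_add_atTop_nhds_zero_nat (𝕜 := ℝ)
        simpa using this.const_mul 3
      have h1 : Tendsto (fun n => ‖s n - b‖) atTop (𝓝 0) := by
        refine squeeze_zero (fun n => norm_nonneg _) (fun n => ?_) h0
        rw [norm_sub_rev]
        exact hs n
      rwa [← tendsto_iff_norm_sub_tendsto_zero] at h1
    have hTlim : Tendsto (fun n => T (s n)) atTop (𝓝 (T b)) :=
      (T.continuous.tendsto _).comp hslim
    constructor
    · have h1 : Tendsto (fun n => T (s n * s n)) atTop (𝓝 (T (b * b))) :=
        (T.continuous.tendsto _).comp (hslim.mul hslim)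
      have h2 : Tendsto (fun n => T (s n) * T (s n)) atTop (𝓝 (T b * T b)) :=
        hTlim.mul hTlim
      exact tendsto_nhds_unique (h1.congr fun n => hmul n) h2
    · have h3 : Tendsto (fun n => star (T (s n))) atTop (𝓝 (star (T b))) :=
        (continuous_star.tendsto _).comp hTlim
      exact tendsto_nhds_unique (h3.congr fun n => hstar2 n) hTlim
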